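/- arXiv:1507.00528 — 4 statements merged into one kernel-verified Lean document; each statement's English description precedes it below -/
import Mathlib

section
/- Let R be a symmetric positive definite n×n matrix partitioned into blocks R₁₁, R₁₂, R₂₁ = R₁₂ᵗ, R₂₂, and let R_τ have diagonal blocks R₁₁, R₂₂ and off-diagonal blocks τR₁₂, τR₂₁. Then det(R_τ) = det(R₁₁)·det(R₂₂)·∏ᵢ(1 − τ²λᵢ), where λᵢ are the eigenvalues of R₁₁^{−1/2} R₁₂ R₂₂^{−1} R₂₁ R₁₁^{−1/2}. -/
open Matrix

open scoped ComplexOrder in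
/-- The positive semidefinite square root, as `Matrix.PosSemidef.sqrt` was defined in Mathlib
(December 2024); the name has since been removed from Mathlib. -/
noncomputable def Matrix.PosSemidef.sqrt {n 𝕜 : Type*} [Fintype n] [DecidableEq n] [RCLike 𝕜]
    {A : Matrix n n 𝕜} (hA : A.PosSemidef) : Matrix n n 𝕜 :=
  hA.1.eigenvectorUnitary.1 * diagonal ((↑) ∘ (√·) ∘ hA.1.eigenvalues) *
    (star hA.1.eigenvectorUnitary : Matrix n n 𝕜)

lemma Matrix.PosSemidef.sqrt_mul_self' {n : ℕ} {A : Matrix (Fin n) (Fin n) ℝ}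
    (hA : A.PosSemidef) : hA.sqrt * hA.sqrt = A := by
  have hU : star (hA.1.eigenvectorUnitary : Matrix (Fin n) (Fin n) ℝ) *
      (hA.1.eigenvectorUnitary : Matrix (Fin n) (Fin n) ℝ) = 1 :=
    Unitary.star_mul_self_of_mem hA.1.eigenvectorUnitary.2
  unfold Matrix.PosSemidef.sqrt
  conv_rhs => rw [hA.1.spectral_theorem, Unitary.conjStarAlgAut_apply]
  simp only [Matrix.mul_assoc]
  rw [← Matrix.mul_assoc (star _) _ _, hU, Matrix.one_mul, ← Matrix.mul_assoc (diagonal _),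
    diagonal_mul_diagonal]
  congr 3
  funext i
  simp [Real.mul_self_sqrt (hA.eigenvalues_nonneg i)]

lemma det_one_sub_smul_herm {n : ℕ} (M : Matrix (Fin n) (Fin n) ℝ) (hM : M.IsHermitian)
    (c : ℝ) : (1 - c • M).det = ∏ i, (1 - c * hM.eigenvalues i) := by
  have hU : (hM.eigenvectorUnitary : Matrix (Fin n) (Fin n) ℝ) *
      star (hM.eigenvectorUnitary : Matrix (Fin n) (Fin n) ℝ) = 1 :=
    Matrix.mem_unitaryGroup_iff.mp hM.eigenvectorUnitary.2
  have key : (1 - c • M) = (hM.eigenvectorUnitary : Matrix (Fin n) (Fin n) ℝ)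
      * (1 - c • diagonal (RCLike.ofReal ∘ hM.eigenvalues))
      * star (hM.eigenvectorUnitary : Matrix (Fin n) (Fin n) ℝ) := by
    rw [Matrix.mul_sub, Matrix.sub_mul, Matrix.mul_one, hU, Matrix.mul_smul,
      Matrix.smul_mul]
    conv_lhs => rw [hM.spectral_theorem, Unitary.conjStarAlgAut_apply]
  rw [key, det_mul_right_comm, hU, Matrix.one_mul]
  have : (1 - c • diagonal (RCLike.ofReal ∘ hM.eigenvalues) : Matrix (Fin n) (Fin n) ℝ)
      = diagonal (fun i => 1 - c * hM.eigenvalues i) := by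
    rw [← diagonal_one, ← diagonal_smul, ← diagonal_sub]
    congr 1
  rw [this, det_diagonal]

/-- `det R_τ = det R₁₁ · det R₂₂ · ∏ᵢ (1 − τ²λᵢ)`, where the `λᵢ` are the eigenvalues of
`R₁₁^{-1/2} R₁₂ R₂₂⁻¹ R₂₁ R₁₁^{-1/2}`. -/
theorem stmt1 {n₁ n₂ : ℕ}
    (R11 : Matrix (Fin n₁) (Fin n₁) ℝ) (R12 : Matrix (Fin n₁) (Fin n₂) ℝ)
    (R22 : Matrix (Fin n₂) (Fin n₂) ℝ)
    (hR : (Matrix.fromBlocks R11 R12 R12ᵀ R22).PosDef)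
    (hR11 : R11.PosDef) (hR22 : R22.PosDef)
    (M : Matrix (Fin n₁) (Fin n₁) ℝ)
    (hMdef : M = hR11.posSemidef.sqrt⁻¹ * R12 * R22⁻¹ * R12ᵀ * hR11.posSemidef.sqrt⁻¹)
    (hM : M.IsHermitian)
    (τ : ℝ) (hτ : τ ∈ Set.Icc (0:ℝ) 1) :
    (Matrix.fromBlocks R11 (τ • R12) (τ • R12ᵀ) R22).det
      = R11.det * R22.det * ∏ i, (1 - τ ^ 2 * hM.eigenvalues i) := by
  haveI : Invertible R22 :=
    R22.invertibleOfIsUnitDet (isUnit_iff_ne_zero.mpr hR22.det_pos.ne')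
  set S := hR11.posSemidef.sqrt with hSdefn
  have hSS : S * S = R11 := hR11.posSemidef.sqrt_mul_self'
  have hSdet : S.det * S.det = R11.det := by rw [← det_mul, hSS]
  have hSdet_ne : S.det ≠ 0 := by
    intro h
    rw [h, mul_zero] at hSdet
    exact hR11.det_pos.ne' hSdet.symm
  have hSunit : IsUnit S.det := isUnit_iff_ne_zero.mpr hSdet_ne
  have hS1 : S * S⁻¹ = 1 := mul_nonsing_inv S hSunit
  have hS2 : S⁻¹ * S = 1 := nonsing_inv_mul S hSunit
  have hSMS : S * M * S = R12 * R22⁻¹ * R12ᵀ := by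
    rw [hMdef]
    simp only [← Matrix.mul_assoc]
    rw [hS1, Matrix.one_mul, Matrix.mul_assoc, hS2, Matrix.mul_one]
  have hschur : R11 - (τ • R12) * R22⁻¹ * (τ • R12ᵀ)
      = S * (1 - (τ ^ 2) • M) * S := by
    have h2 : S * ((τ ^ 2) • M) * S = (τ ^ 2) • (R12 * R22⁻¹ * R12ᵀ) := by
      rw [Matrix.mul_smul, Matrix.smul_mul, hSMS]
    rw [Matrix.mul_sub, Matrix.sub_mul, Matrix.mul_one, hSS, h2, Matrix.smul_mul,
      Matrix.smul_mul, Matrix.mul_smul, smul_smul, ← sq]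
  rw [det_fromBlocks₂₂, invOf_eq_nonsing_inv, hschur, det_mul, det_mul,
    det_one_sub_smul_herm M hM (τ ^ 2)]
  ring_nf
  rw [← hSdet]
  ring
end

section
/- Let Q be a symmetric positive definite n×n matrix, partitioned as Q₁₁ (an (n−1)×(n−1) block), a column vector q, its transpose qᵗ, and scalar 1 in the bottom-right corner. Suppose Q has only non-negative entries and Q^{−1} has only non-positive off-diagonal entries. For τ ∈ [0,1] let Q_τ be the matrix with the same Q₁₁ and bottom-right entry 1 but off-diagonal blocks τq and τqᵗ. Then Q_τ is positive definite and Q_τ^{−1} has only non-positive off-diagonal entries. -/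
open Matrix

private lemma psd_smul {n : Type*} [Fintype n] {A : Matrix n n ℝ} {c : ℝ} (hc : 0 ≤ c)
    (hA : A.PosSemidef) : (c • A).PosSemidef := by
  refine posSemidef_iff_dotProduct_mulVec.mpr ⟨?_, fun x => ?_⟩
  · have := hA.1
    simp only [Matrix.IsHermitian, conjTranspose_smul, star_trivial] at *
    rw [this]
  · rw [smul_mulVec, dotProduct_smul, smul_eq_mul]
    exact mul_nonneg hc (hA.dotProduct_mulVec_nonneg x)

private lemma pd_smul {n : Type*} [Fintype n] {A : Matrix n n ℝ} {c : ℝ} (hc : 0 < c)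
    (hA : A.PosDef) : (c • A).PosDef := by
  refine posDef_iff_dotProduct_mulVec.mpr ⟨?_, fun x hx => ?_⟩
  · have := hA.1
    simp only [Matrix.IsHermitian, conjTranspose_smul, star_trivial] at *
    rw [this]
  · rw [smul_mulVec, dotProduct_smul, smul_eq_mul]
    exact mul_pos hc (hA.dotProduct_mulVec_pos hx)

private lemma pd_block11 {a b : ℕ} {A : Matrix (Fin a) (Fin a) ℝ} {B : Matrix (Fin a) (Fin b) ℝ}
    {C : Matrix (Fin b) (Fin a) ℝ} {D : Matrix (Fin b) (Fin b) ℝ}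
    (h : (fromBlocks A B C D).PosDef) : A.PosDef := by
  refine posDef_iff_dotProduct_mulVec.mpr ⟨?_, fun x hx => ?_⟩
  · have h1 := h.1
    rw [Matrix.IsHermitian, fromBlocks_conjTranspose] at h1
    ext i j
    have := congrFun (congrFun h1 (Sum.inl i)) (Sum.inl j)
    simpa using this
  · have hx' : Sum.elim x (0 : Fin b → ℝ) ≠ 0 := by
      intro h0
      exact hx (funext fun i => congrFun h0 (Sum.inl i))
    have := h.dotProduct_mulVec_pos hx'
    rw [fromBlocks_mulVec] at this
    simpa [sumElim_dotProduct_sumElim] using this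

private lemma pd_diag_blocks {a b : ℕ} {A : Matrix (Fin a) (Fin a) ℝ}
    {D : Matrix (Fin b) (Fin b) ℝ} (hA : A.PosDef) (hD : D.PosDef) :
    (fromBlocks A 0 0 D).PosDef := by
  refine posDef_iff_dotProduct_mulVec.mpr ⟨?_, fun x hx => ?_⟩
  · rw [Matrix.IsHermitian, fromBlocks_conjTranspose, conjTranspose_zero, hA.1, hD.1]
    rfl
  · have hx' : (x ∘ Sum.inl) ≠ 0 ∨ (x ∘ Sum.inr) ≠ 0 := by
      by_contra hcon
      push_neg at hcon
      apply hx
      funext i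
      cases i with
      | inl i => exact congrFun hcon.1 i
      | inr i => exact congrFun hcon.2 i
    have hrw : x = Sum.elim (x ∘ Sum.inl) (x ∘ Sum.inr) := (Sum.elim_comp_inl_inr x).symm
    rw [hrw, fromBlocks_mulVec]
    simp only [zero_mulVec, add_zero, zero_add]
    rw [show star (Sum.elim (x ∘ Sum.inl) (x ∘ Sum.inr))
        = Sum.elim (star (x ∘ Sum.inl)) (star (x ∘ Sum.inr)) from rfl,
      sumElim_dotProduct_sumElim]
    rcases hx' with h1 | h1
    · exact add_pos_of_pos_of_nonneg (hA.dotProduct_mulVec_pos h1) (hD.posSemidef.dotProduct_mulVec_nonneg _)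
    · exact add_pos_of_nonneg_of_pos (hA.posSemidef.dotProduct_mulVec_nonneg _) (hD.dotProduct_mulVec_pos h1)

private lemma key_inv {m : ℕ} (A : Matrix (Fin m) (Fin m) ℝ) (q : Matrix (Fin m) (Fin 1) ℝ)
    (hdet : IsUnit A.det) (t α : ℝ) (hα : α = (qᵀ * (A⁻¹ * q)) 0 0)
    (hs0 : 1 - t^2 * α ≠ 0) :
    (fromBlocks A (t • q) (t • qᵀ) (1 : Matrix (Fin 1) (Fin 1) ℝ))⁻¹ =
    fromBlocks (A⁻¹ + (t^2/(1 - t^2 * α)) • (A⁻¹ * q * (qᵀ * A⁻¹)))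
      (-(t/(1 - t^2 * α)) • (A⁻¹ * q))
      (-(t/(1 - t^2 * α)) • (qᵀ * A⁻¹))
      ((1/(1 - t^2 * α)) • (1 : Matrix (Fin 1) (Fin 1) ℝ)) := by
  have hAinv : A * A⁻¹ = 1 := mul_nonsing_inv A hdet
  have hqu : qᵀ * A⁻¹ * q = α • (1 : Matrix (Fin 1) (Fin 1) ℝ) := by
    rw [Matrix.mul_assoc]
    ext i j
    fin_cases i; fin_cases j
    simp [hα]
  apply inv_eq_right_inv
  rw [fromBlocks_multiply]
  have e11 : A * (A⁻¹ + (t^2/(1 - t^2 * α)) • (A⁻¹ * q * (qᵀ * A⁻¹)))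
      + (t • q) * (-(t/(1 - t^2 * α)) • (qᵀ * A⁻¹)) = 1 := by
    simp only [Matrix.mul_add, Matrix.mul_smul, Matrix.smul_mul, smul_smul,
      Matrix.one_mul, Matrix.mul_one, ← Matrix.mul_assoc, hAinv, hqu]
    match_scalars <;> (field_simp; try ring)
  have e12 : A * (-(t/(1 - t^2 * α)) • (A⁻¹ * q))
      + (t • q) * ((1/(1 - t^2 * α)) • (1 : Matrix (Fin 1) (Fin 1) ℝ)) = 0 := by
    simp only [Matrix.mul_add, Matrix.mul_smul, Matrix.smul_mul, smul_smul,
      Matrix.one_mul, Matrix.mul_one, ← Matrix.mul_assoc, hAinv, hqu]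
    match_scalars <;> (field_simp; try ring)
  have e21 : (t • qᵀ) * (A⁻¹ + (t^2/(1 - t^2 * α)) • (A⁻¹ * q * (qᵀ * A⁻¹)))
      + (1 : Matrix (Fin 1) (Fin 1) ℝ) * (-(t/(1 - t^2 * α)) • (qᵀ * A⁻¹)) = 0 := by
    simp only [Matrix.mul_add, Matrix.mul_smul, Matrix.smul_mul, smul_smul,
      Matrix.one_mul, Matrix.mul_one, ← Matrix.mul_assoc, hAinv, hqu]
    match_scalars <;> (field_simp; try ring)
  have e22 : (t • qᵀ) * (-(t/(1 - t^2 * α)) • (A⁻¹ * q))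
      + (1 : Matrix (Fin 1) (Fin 1) ℝ) * ((1/(1 - t^2 * α)) • (1 : Matrix (Fin 1) (Fin 1) ℝ)) = 1 := by
    simp only [Matrix.mul_add, Matrix.mul_smul, Matrix.smul_mul, smul_smul,
      Matrix.one_mul, Matrix.mul_one, ← Matrix.mul_assoc, hAinv, hqu]
    match_scalars <;> (field_simp; try ring)
  rw [e11, e12, e21, e22, fromBlocks_one]

/-- If `Q = [[Q₁₁, q],[qᵗ, 1]]` is symmetric positive definite with non-negative entries and
`Q⁻¹` has non-positive off-diagonal entries, then for every `τ ∈ [0,1]` the matrix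
`Q_τ = [[Q₁₁, τq],[τqᵗ, 1]]` is positive definite and `Q_τ⁻¹` has non-positive
off-diagonal entries. -/
theorem stmt4 {m : ℕ}
    (Q11 : Matrix (Fin m) (Fin m) ℝ) (q : Matrix (Fin m) (Fin 1) ℝ)
    (hQ : (Matrix.fromBlocks Q11 q qᵀ (1 : Matrix (Fin 1) (Fin 1) ℝ)).PosDef)
    (hQnonneg : ∀ i j, 0 ≤ Matrix.fromBlocks Q11 q qᵀ (1 : Matrix (Fin 1) (Fin 1) ℝ) i j)
    (hQinv : ∀ i j, i ≠ j →
      (Matrix.fromBlocks Q11 q qᵀ (1 : Matrix (Fin 1) (Fin 1) ℝ))⁻¹ i j ≤ 0)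
    (τ : ℝ) (hτ : τ ∈ Set.Icc (0:ℝ) 1) :
    (Matrix.fromBlocks Q11 (τ • q) (τ • qᵀ) (1 : Matrix (Fin 1) (Fin 1) ℝ)).PosDef ∧
    ∀ i j, i ≠ j →
      (Matrix.fromBlocks Q11 (τ • q) (τ • qᵀ) (1 : Matrix (Fin 1) (Fin 1) ℝ))⁻¹ i j ≤ 0 := by
  obtain ⟨hτ0, hτ1⟩ := hτ
  have hApd : Q11.PosDef := pd_block11 hQ
  have hdet : IsUnit Q11.det := isUnit_iff_ne_zero.mpr hApd.det_pos.ne'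
  set α : ℝ := (qᵀ * (Q11⁻¹ * q)) 0 0 with hαdef
  -- α ≥ 0
  have hα0 : 0 ≤ α := by
    have h1 : α = (fun i => q i 0) ⬝ᵥ (Q11⁻¹ *ᵥ (fun i => q i 0)) := by
      simp [hαdef, Matrix.mul_apply, Matrix.mulVec, dotProduct]
    have h2 := hApd.inv.posSemidef.dotProduct_mulVec_nonneg (fun i => q i 0)
    rw [h1]
    simpa using h2
  -- α < 1
  have hα1 : α < 1 := by
    haveI := Q11.invertibleOfIsUnitDet hdet
    have hd := hQ.det_pos
    rw [det_fromBlocks₁₁, invOf_eq_nonsing_inv] at hd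
    have h3 : ((1 : Matrix (Fin 1) (Fin 1) ℝ) - qᵀ * Q11⁻¹ * q).det = 1 - α := by
      rw [det_fin_one]
      simp [hαdef, Matrix.mul_assoc]
    rw [h3] at hd
    nlinarith [hApd.det_pos]
  have hs1 : (0:ℝ) < 1 - α := by linarith
  have hτ2 : τ^2 ≤ 1 := by nlinarith
  have hsτ : (0:ℝ) < 1 - τ^2 * α := by nlinarith [mul_le_mul_of_nonneg_right hτ2 hα0]
  -- inverse of the original matrix
  have hQform : Matrix.fromBlocks Q11 q qᵀ (1 : Matrix (Fin 1) (Fin 1) ℝ)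
      = fromBlocks Q11 ((1:ℝ) • q) ((1:ℝ) • qᵀ) (1 : Matrix (Fin 1) (Fin 1) ℝ) := by
    rw [one_smul, one_smul]
  have hinv1 := key_inv Q11 q hdet 1 α hαdef (by norm_num; linarith)
  -- entries of Q11⁻¹ * q are nonnegative
  have hu : ∀ i, 0 ≤ (Q11⁻¹ * q) i 0 := by
    intro i
    have h := hQinv (Sum.inl i) (Sum.inr 0) (by simp)
    rw [hQform, hinv1] at h
    simp only [fromBlocks_apply₁₂, Matrix.smul_apply, smul_eq_mul, one_pow] at h
    norm_num at h
    have h2 := mul_nonneg hs1.le h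
    rwa [← mul_assoc, mul_inv_cancel₀ hs1.ne', one_mul] at h2
  -- symmetry
  have hsym : ∀ j, (qᵀ * Q11⁻¹) 0 j = (Q11⁻¹ * q) j 0 := by
    intro j
    have hH : Q11⁻¹ᵀ = Q11⁻¹ := by
      rw [Matrix.transpose_nonsing_inv]
      have : Q11ᵀ = Q11 := by
        have := hApd.1
        rwa [Matrix.IsHermitian, conjTranspose_eq_transpose_of_trivial] at this
      rw [this]
    simp only [Matrix.mul_apply, Matrix.transpose_apply]
    apply Finset.sum_congr rfl
    intro k _
    have hkj : Q11⁻¹ k j = Q11⁻¹ j k := by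
      have := congrFun (congrFun hH j) k
      rw [Matrix.transpose_apply] at this
      exact this
    rw [hkj]
    ring
  have hent : ∀ i j, (Q11⁻¹ * q * (qᵀ * Q11⁻¹)) i j
      = (Q11⁻¹ * q) i 0 * (qᵀ * Q11⁻¹) 0 j := by
    intro i j
    rw [Matrix.mul_apply, Fin.sum_univ_one]
  -- off-diagonal inequality of the original inverse top-left block
  have hoff : ∀ i j, i ≠ j →
      Q11⁻¹ i j + (1/(1-α)) * ((Q11⁻¹ * q) i 0 * (Q11⁻¹ * q) j 0) ≤ 0 := by
    intro i j hij
    have h := hQinv (Sum.inl i) (Sum.inl j) (by simpa using hij)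
    rw [hQform, hinv1] at h
    simp only [fromBlocks_apply₁₁, Matrix.add_apply, Matrix.smul_apply, smul_eq_mul,
      one_pow] at h
    rw [hent i j, hsym j] at h
    norm_num at h
    rw [one_div]
    exact h
  constructor
  · -- positive definiteness
    have hQ0pd : (fromBlocks Q11 (0 : Matrix (Fin m) (Fin 1) ℝ) (0 : Matrix (Fin 1) (Fin m) ℝ)
        (1 : Matrix (Fin 1) (Fin 1) ℝ)).PosDef := pd_diag_blocks hApd Matrix.PosDef.one
    have hconv : Matrix.fromBlocks Q11 (τ • q) (τ • qᵀ) (1 : Matrix (Fin 1) (Fin 1) ℝ)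
        = τ • (Matrix.fromBlocks Q11 q qᵀ (1 : Matrix (Fin 1) (Fin 1) ℝ))
          + (1-τ) • (fromBlocks Q11 0 0 (1 : Matrix (Fin 1) (Fin 1) ℝ)) := by
      ext i j
      rcases i with i | i <;> rcases j with j | j <;>
        simp [Matrix.add_apply, Matrix.smul_apply] <;> ring
    rw [hconv]
    rcases eq_or_lt_of_le hτ1 with h1 | h1
    · rw [h1]
      simpa using hQ
    · apply Matrix.PosDef.posSemidef_add (psd_smul hτ0 hQ.posSemidef)
      exact pd_smul (show (0:ℝ) < 1 - τ by linarith) hQ0pd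
  · -- sign conditions on the inverse
    intro i j hij
    rw [key_inv Q11 q hdet τ α hαdef hsτ.ne']
    have hcle : τ^2/(1 - τ^2*α) ≤ 1/(1-α) := by
      rw [div_le_div_iff₀ hsτ hs1]
      nlinarith
    rcases i with i | i <;> rcases j with j | j
    · -- top-left
      have hij' : i ≠ j := by simpa using hij
      have hkey := hoff i j hij'
      simp only [fromBlocks_apply₁₁, Matrix.add_apply, Matrix.smul_apply, smul_eq_mul]
      rw [hent i j, hsym j]
      have hprod : 0 ≤ (Q11⁻¹ * q) i 0 * (Q11⁻¹ * q) j 0 := mul_nonneg (hu i) (hu j)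
      nlinarith [mul_le_mul_of_nonneg_right hcle hprod]
    · -- top-right
      simp only [fromBlocks_apply₁₂, Matrix.smul_apply, smul_eq_mul]
      have hj0 : j = 0 := Subsingleton.elim j 0
      rw [hj0]
      exact mul_nonpos_of_nonpos_of_nonneg
        (neg_nonpos.mpr (div_nonneg hτ0 hsτ.le)) (hu i)
    · -- bottom-left
      simp only [fromBlocks_apply₂₁, Matrix.smul_apply, smul_eq_mul]
      have hi0 : i = 0 := Subsingleton.elim i 0
      rw [hi0, hsym j]
      exact mul_nonpos_of_nonpos_of_nonneg
        (neg_nonpos.mpr (div_nonneg hτ0 hsτ.le)) (hu j)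
    · exact absurd (congrArg Sum.inr (Subsingleton.elim i j)) hij
end

section
/- For fixed x > 0, the central gamma cdf G_α(x) = ∫₀ˣ Γ(α)^{−1} e^{−t} t^{α−1} dt is strictly decreasing as a function of the shape parameter α > 0. -/
open Real MeasureTheory Set
open scoped ENNReal

/-- The (central) gamma cdf with shape parameter `α`:
`G_α(x) = ∫₀ˣ Γ(α)⁻¹ e^{−t} t^{α−1} dt`. -/
noncomputable def centralGammaCDF (α x : ℝ) : ℝ :=
  ∫ t in (0:ℝ)..x, (Real.Gamma α)⁻¹ * Real.exp (-t) * t ^ (α - 1)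

lemma gInt (a : ℝ) (ha : 0 < a) :
    IntegrableOn (fun t : ℝ => (Real.Gamma a)⁻¹ * Real.exp (-t) * t ^ (a - 1)) (Ioi 0) := by
  have h := (Real.GammaIntegral_convergent ha).const_mul (Real.Gamma a)⁻¹
  simp only [mul_assoc] at h ⊢
  exact h

lemma gTot (a : ℝ) (ha : 0 < a) :
    ∫ t in Ioi (0:ℝ), (Real.Gamma a)⁻¹ * Real.exp (-t) * t ^ (a - 1) = 1 := by
  simp_rw [mul_assoc, MeasureTheory.integral_const_mul, ← Real.Gamma_eq_integral ha]
  exact inv_mul_cancel₀ (Real.Gamma_pos_of_pos ha).ne'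

/-- For fixed `x > 0`, the central gamma cdf `G_α(x)` is strictly decreasing in the shape
parameter `α > 0`. -/
theorem stmt12 (x : ℝ) (hx : 0 < x) :
    StrictAntiOn (fun α => centralGammaCDF α x) (Set.Ioi (0:ℝ)) := by
  intro α hα β hβ hαβ
  simp only [Set.mem_Ioi] at hα hβ
  have hΓα := Real.Gamma_pos_of_pos hα
  have hΓβ := Real.Gamma_pos_of_pos hβ
  have hd : 0 < β - α := sub_pos.2 hαβ
  set gA : ℝ → ℝ := fun t => (Real.Gamma α)⁻¹ * Real.exp (-t) * t ^ (α - 1) with hgA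
  set gB : ℝ → ℝ := fun t => (Real.Gamma β)⁻¹ * Real.exp (-t) * t ^ (β - 1) with hgB
  set c : ℝ := (Real.Gamma β / Real.Gamma α) ^ (β - α)⁻¹ with hc
  have hcpos : 0 < c := Real.rpow_pos_of_pos (div_pos hΓβ hΓα) _
  have hcrpow : c ^ (β - α) = Real.Gamma β / Real.Gamma α :=
    Real.rpow_inv_rpow (div_pos hΓβ hΓα).le hd.ne'
  -- factorization of the difference
  have hfac : ∀ t : ℝ, 0 < t →
      gA t - gB t = Real.exp (-t) * t ^ (α - 1) * ((Real.Gamma α)⁻¹ - (Real.Gamma β)⁻¹ * t ^ (β - α)) := by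
    intro t ht
    have : t ^ (β - 1) = t ^ (α - 1) * t ^ (β - α) := by
      rw [← Real.rpow_add ht]; ring_nf
    simp only [hgA, hgB, this]; ring
  have hsign : ∀ t : ℝ, 0 < t → ((t < c → 0 < gA t - gB t) ∧ (c < t → gA t - gB t < 0)) := by
    intro t ht
    have hpos : 0 < Real.exp (-t) * t ^ (α - 1) :=
      mul_pos (Real.exp_pos _) (Real.rpow_pos_of_pos ht _)
    have key : ∀ s : ℝ, 0 ≤ s → (s < c → 0 < (Real.Gamma α)⁻¹ - (Real.Gamma β)⁻¹ * s ^ (β - α))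
        ∧ (c < s → (Real.Gamma α)⁻¹ - (Real.Gamma β)⁻¹ * s ^ (β - α) < 0) := by
      intro s hs
      constructor
      · intro hsc
        have : s ^ (β - α) < Real.Gamma β / Real.Gamma α := by
          rw [← hcrpow]; exact Real.rpow_lt_rpow hs hsc hd
        have h2 := mul_lt_mul_of_pos_left this (inv_pos.2 hΓβ)
        rw [div_eq_mul_inv, ← mul_assoc, inv_mul_cancel₀ hΓβ.ne', one_mul] at h2
        linarith
      · intro hcs
        have : Real.Gamma β / Real.Gamma α < s ^ (β - α) := by
          rw [← hcrpow]; exact Real.rpow_lt_rpow hcpos.le hcs hd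
        have h2 := mul_lt_mul_of_pos_left this (inv_pos.2 hΓβ)
        rw [div_eq_mul_inv, ← mul_assoc, inv_mul_cancel₀ hΓβ.ne', one_mul] at h2
        linarith
    constructor
    · intro htc
      rw [hfac t ht]
      exact mul_pos hpos ((key t ht.le).1 htc)
    · intro hct
      rw [hfac t ht]
      exact mul_neg_of_pos_of_neg hpos ((key t ht.le).2 hct)
  -- integrability
  have hIA := gInt α hα
  have hIB := gInt β hβ
  have hIAB : IntegrableOn (fun t => gA t - gB t) (Ioi 0) := hIA.sub hIB
  have hIocA : IntegrableOn gA (Ioc 0 x) := hIA.mono_set Ioc_subset_Ioi_self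
  have hIocB : IntegrableOn gB (Ioc 0 x) := hIB.mono_set Ioc_subset_Ioi_self
  have hiA : IntervalIntegrable gA volume 0 x :=
    (intervalIntegrable_iff_integrableOn_Ioc_of_le hx.le).2 hIocA
  have hiB : IntervalIntegrable gB volume 0 x :=
    (intervalIntegrable_iff_integrableOn_Ioc_of_le hx.le).2 hIocB
  -- reduce goal
  have hgoal : centralGammaCDF β x < centralGammaCDF α x := by
    rw [show centralGammaCDF α x = ∫ t in (0:ℝ)..x, gA t from rfl,
      show centralGammaCDF β x = ∫ t in (0:ℝ)..x, gB t from rfl, ← sub_pos,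
      ← intervalIntegral.integral_sub hiA hiB]
    rcases le_or_gt x c with hxc | hcx
    · -- x ≤ c : integrand positive on (0, x)
      apply intervalIntegral.intervalIntegral_pos_of_pos_on (hiA.sub hiB)
      · intro t ht
        exact (hsign t ht.1).1 (lt_of_lt_of_le ht.2 hxc)
      · exact hx
    · -- c < x : use total integral = 0
      have htot : ∫ t in Ioi (0:ℝ), (gA t - gB t) = 0 := by
        rw [MeasureTheory.integral_sub hIA hIB, gTot α hα, gTot β hβ, sub_self]
      have hsplit : (∫ t in Ioc (0:ℝ) x, (gA t - gB t)) + ∫ t in Ioi x, (gA t - gB t)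
          = ∫ t in Ioi (0:ℝ), (gA t - gB t) := by
        rw [← MeasureTheory.setIntegral_union (Ioc_disjoint_Ioi le_rfl)
          measurableSet_Ioi (hIAB.mono_set Ioc_subset_Ioi_self)
          (hIAB.mono_set (Ioi_subset_Ioi hx.le)), Ioc_union_Ioi_eq_Ioi hx.le]
      have htail : ∫ t in Ioi x, (gA t - gB t) < 0 := by
        have hnn : 0 ≤ᵐ[volume.restrict (Ioi x)] fun t => gB t - gA t := by
          filter_upwards [ae_restrict_mem measurableSet_Ioi] with t ht
          have := (hsign t (hx.trans ht)).2 (hcx.trans ht)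
          simp only [Pi.zero_apply]
          linarith
        have hint : IntegrableOn (fun t => gB t - gA t) (Ioi x) := by
          have h := (hIAB.mono_set (Ioi_subset_Ioi hx.le)).neg
          have hfun : (fun t => gB t - gA t) = fun t => -(gA t - gB t) := by
            ext t; ring
          rw [hfun]; exact h
        have hpos : 0 < ∫ t in Ioi x, (gB t - gA t) := by
          rw [MeasureTheory.setIntegral_pos_iff_support_of_nonneg_ae hnn hint]
          have hsub : Ioi x ⊆ Function.support (fun t => gB t - gA t) ∩ Ioi x := by
            intro t ht
            refine ⟨?_, ht⟩
            have := (hsign t (hx.trans ht)).2 (hcx.trans ht)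
            simp only [Function.mem_support]
            intro h0; linarith
          calc (0:ℝ≥0∞) < volume (Ioi x) := by simp
            _ ≤ _ := measure_mono hsub
        have heq : ∫ t in Ioi x, (gB t - gA t) = - ∫ t in Ioi x, (gA t - gB t) := by
          rw [← MeasureTheory.integral_neg]; congr 1; ext t; ring
        rw [heq] at hpos
        linarith
      rw [intervalIntegral.integral_of_le hx.le]
      have := hsplit.trans htot
      linarith
  simpa using hgoal
end

section
/- If R is a symmetric positive definite matrix and S is a signature matrix (diagonal with entries ±1) such that SR^{−1}S has non-positive off-diagonal entries and non-negative inverse, then every principal submatrix R_M satisfies: there exists a signature matrix S_M (namely the restriction of S to M) such that S_M R_M^{−1} S_M has non-positive off-diagonal entries; moreover S_M R_M S_M has non-negative entries. If additionally all entries of R are positive, then S = ±I_n. -/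
open Matrix

lemma aux_posDef_submatrix {m n : Type*} [Fintype n] [Fintype m] [DecidableEq n] [DecidableEq m]
    {A : Matrix n n ℝ} (hA : A.PosDef) (f : m → n) (hf : Function.Injective f) :
    (A.submatrix f f).PosDef := by
  refine PosDef.of_dotProduct_mulVec_pos (hA.1.submatrix f) fun x hx => ?_
  set y : n → ℝ := fun k => ∑ j, if k = f j then x j else 0 with hy
  have key : ∀ g : n → ℝ, ∑ k, y k * g k = ∑ i, x i * g (f i) := by
    intro g
    simp only [hy, Finset.sum_mul, ite_mul, zero_mul]
    rw [Finset.sum_comm]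
    simp [Finset.sum_ite_eq']
  have hyf : ∀ i, y (f i) = x i := by
    intro i
    simp [hy, hf.eq_iff, Finset.sum_ite_eq']
  have hy0 : y ≠ 0 := by
    intro h
    apply hx
    funext i
    have := congrFun h (f i)
    rw [hyf i] at this
    exact this
  have hq : star x ⬝ᵥ (A.submatrix f f) *ᵥ x = star y ⬝ᵥ A *ᵥ y := by
    simp only [star_trivial, dotProduct, mulVec, submatrix_apply]
    rw [key]
    refine Finset.sum_congr rfl fun i _ => ?_
    congr 1
    rw [show (∑ k : n, A (f i) k * y k) = ∑ j : m, x j * A (f i) (f j) from by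
      rw [← key]; exact Finset.sum_congr rfl fun k _ => mul_comm _ _]
    exact Finset.sum_congr rfl fun j _ => mul_comm _ _
  rw [hq]
  exact hA.dotProduct_mulVec_pos hy0

lemma aux_stieltjes_inv_nonneg {n : Type*} [Fintype n] [DecidableEq n] {A : Matrix n n ℝ}
    (hA : A.PosDef) (hoff : ∀ i j, i ≠ j → A i j ≤ 0) : ∀ i j, 0 ≤ A⁻¹ i j := by
  intro i j
  have hU : IsUnit A.det := isUnit_iff_ne_zero.mpr hA.det_pos.ne'
  set x : n → ℝ := A⁻¹ *ᵥ Pi.single j 1 with hxdef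
  have hAx : A *ᵥ x = Pi.single j 1 := by
    rw [hxdef, mulVec_mulVec, mul_nonsing_inv _ hU, one_mulVec]
  set u : n → ℝ := fun k => max (x k) 0 with hu
  set v : n → ℝ := fun k => max (-(x k)) 0 with hv
  have hunn : ∀ k, 0 ≤ u k := fun k => le_max_right _ _
  have hvnn : ∀ k, 0 ≤ v k := fun k => le_max_right _ _
  have huv : ∀ k, u k * v k = 0 := by
    intro k
    rcases le_total (x k) 0 with h | h
    · simp [hu, hv, max_eq_right h]
    · simp [hu, hv, max_eq_right (neg_nonpos.mpr h)]
  have hxuv : x = u - v := by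
    funext k
    simp only [hu, hv, Pi.sub_apply]
    rcases le_total (x k) 0 with h | h
    · rw [max_eq_right h, max_eq_left (neg_nonneg.mpr h)]; ring
    · rw [max_eq_left h, max_eq_right (neg_nonpos.mpr h)]; ring
  -- v ⬝ᵥ A *ᵥ u ≤ 0
  have h1 : v ⬝ᵥ A *ᵥ u ≤ 0 := by
    simp only [dotProduct, mulVec]
    apply Finset.sum_nonpos
    intro k _
    rw [Finset.mul_sum]
    apply Finset.sum_nonpos
    intro l _
    rcases eq_or_ne k l with rfl | hkl
    · rw [show v k * (A k k * u k) = (u k * v k) * A k k by ring, huv, zero_mul]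
    · have := hoff k l hkl
      have := mul_nonneg (hvnn k) (hunn l)
      nlinarith
  have h2 : 0 ≤ v ⬝ᵥ (A *ᵥ x) := by
    rw [hAx]
    simp [dotProduct, Pi.single_apply]
    positivity
  have h3 : v ⬝ᵥ A *ᵥ x = v ⬝ᵥ A *ᵥ u - v ⬝ᵥ A *ᵥ v := by
    rw [hxuv, mulVec_sub, dotProduct_sub]
  have h4 : v ⬝ᵥ A *ᵥ v ≤ 0 := by linarith
  have hv0 : v = 0 := by
    by_contra hne
    have := hA.dotProduct_mulVec_pos hne
    rw [star_trivial] at this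
    linarith
  have hx : 0 ≤ x i := by
    have := congrFun hxuv i
    have h5 := congrFun hv0 i
    simp only [Pi.sub_apply, Pi.zero_apply] at this h5
    rw [this, h5, sub_zero]
    exact hunn i
  have : x i = A⁻¹ i j := by
    rw [hxdef]
    simp [mulVec, Pi.single_apply, Finset.sum_ite_eq]
  rwa [this] at hx

lemma aux_block {p q : Type*} [Fintype p] [Fintype q] [DecidableEq p] [DecidableEq q]
    {C : Matrix (p ⊕ q) (p ⊕ q) ℝ} (hC : C.PosDef)
    (hoff : ∀ i j, i ≠ j → C⁻¹ i j ≤ 0) :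
    ∀ i j : p, i ≠ j → (C.toBlocks₁₁)⁻¹ i j ≤ 0 := by
  intro i j hij
  set D : Matrix (p ⊕ q) (p ⊕ q) ℝ := C⁻¹ with hD
  have hDpd : D.PosDef := hC.inv
  have hD22 : (D.toBlocks₂₂).PosDef := by
    have := aux_posDef_submatrix hDpd (Sum.inr : q → p ⊕ q) Sum.inr_injective
    exact this
  have hD22off : ∀ k l, k ≠ l → D.toBlocks₂₂ k l ≤ 0 := fun k l hkl =>
    hoff _ _ (fun h => hkl (Sum.inr_injective h))
  have hD22inv : ∀ k l, 0 ≤ (D.toBlocks₂₂)⁻¹ k l := aux_stieltjes_inv_nonneg hD22 hD22off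
  letI : Invertible D := invertibleOfIsUnitDet D (isUnit_iff_ne_zero.mpr hDpd.det_pos.ne')
  letI : Invertible (D.toBlocks₂₂) :=
    invertibleOfIsUnitDet _ (isUnit_iff_ne_zero.mpr hD22.det_pos.ne')
  letI hfb : Invertible (fromBlocks D.toBlocks₁₁ D.toBlocks₁₂ D.toBlocks₂₁ D.toBlocks₂₂) := by
    rw [fromBlocks_toBlocks]; infer_instance
  letI := Matrix.invertibleOfFromBlocks₂₂Invertible D.toBlocks₁₁ D.toBlocks₁₂ D.toBlocks₂₁ D.toBlocks₂₂
  have hSchur := Matrix.invOf_fromBlocks₂₂_eq D.toBlocks₁₁ D.toBlocks₁₂ D.toBlocks₂₁ D.toBlocks₂₂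
  -- C = ⅟D
  have hCD : C = ⅟D := by
    rw [invOf_eq_nonsing_inv, hD, nonsing_inv_nonsing_inv _ (isUnit_iff_ne_zero.mpr hC.det_pos.ne')]
  set X : Matrix p p ℝ := D.toBlocks₁₁ - D.toBlocks₁₂ * ⅟(D.toBlocks₂₂) * D.toBlocks₂₁ with hX
  have hC11 : C.toBlocks₁₁ = ⅟X := by
    rw [hCD]
    have h2 : ⅟D = ⅟(fromBlocks D.toBlocks₁₁ D.toBlocks₁₂ D.toBlocks₂₁ D.toBlocks₂₂) := by
      rw [invOf_eq_nonsing_inv, invOf_eq_nonsing_inv, fromBlocks_toBlocks]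
    rw [h2, hSchur, toBlocks_fromBlocks₁₁]
    simp only [invOf_eq_nonsing_inv, hX]
  have hC11inv : (C.toBlocks₁₁)⁻¹ = X := by
    rw [hC11, invOf_eq_nonsing_inv, nonsing_inv_nonsing_inv _ (isUnit_det_of_invertible X)]
  rw [hC11inv, hX, invOf_eq_nonsing_inv]
  have hterm : 0 ≤ (D.toBlocks₁₂ * (D.toBlocks₂₂)⁻¹ * D.toBlocks₂₁) i j := by
    rw [Matrix.mul_apply]
    apply Finset.sum_nonneg
    intro k _
    rw [Matrix.mul_apply]
    have h21 : D.toBlocks₂₁ k j ≤ 0 := hoff _ _ (by simp)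
    rw [Finset.sum_mul]
    apply Finset.sum_nonneg
    intro l _
    have h12 : D.toBlocks₁₂ i l ≤ 0 := hoff _ _ (by simp)
    have hinv : 0 ≤ (D.toBlocks₂₂)⁻¹ l k := hD22inv l k
    nlinarith [mul_nonneg (mul_nonneg (neg_nonneg.mpr h12) hinv) (neg_nonneg.mpr h21)]
  have h11 : D.toBlocks₁₁ i j ≤ 0 := hoff _ _ (by simp [hij])
  simp only [Matrix.sub_apply]
  linarith

lemma aux_diag_conj {n : Type*} [Fintype n] [DecidableEq n] {R : Matrix n n ℝ} (hR : R.PosDef)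
    {d : n → ℝ} (hd : ∀ i, d i ≠ 0) : (Matrix.diagonal d * R * Matrix.diagonal d).PosDef := by
  refine PosDef.of_dotProduct_mulVec_pos ?_ ?_
  · have hsd : star d = d := funext fun i => star_trivial _
    show (Matrix.diagonal d * R * Matrix.diagonal d)ᴴ = _
    rw [conjTranspose_mul, conjTranspose_mul, diagonal_conjTranspose, hsd, hR.1.eq,
      Matrix.mul_assoc]
  · intro x hx
    set y := fun i => d i * x i with hy
    have hy0 : y ≠ 0 := by
      intro h
      apply hx
      funext i
      have h2 := congrFun h i
      simp only [hy, Pi.zero_apply, mul_eq_zero] at h2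
      exact h2.resolve_left (hd i)
    have hq : star x ⬝ᵥ (Matrix.diagonal d * R * Matrix.diagonal d) *ᵥ x = star y ⬝ᵥ R *ᵥ y := by
      simp only [star_trivial, dotProduct, mulVec, mul_diagonal, diagonal_mul, hy]
      refine Finset.sum_congr rfl fun i _ => ?_
      rw [Finset.mul_sum, Finset.mul_sum]
      exact Finset.sum_congr rfl fun j _ => by ring
    rw [hq]
    exact hR.dotProduct_mulVec_pos hy0

lemma aux_finset {n : ℕ} {A : Matrix (Fin n) (Fin n) ℝ} (hA : A.PosDef)
    (hoff : ∀ i j, i ≠ j → A⁻¹ i j ≤ 0) (M : Finset (Fin n)) :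
    ∀ i j : M, i ≠ j →
      ((A.submatrix (fun i : M => (i : Fin n)) (fun i : M => (i : Fin n)))⁻¹) i j ≤ 0 := by
  intro i j hij
  set e : {x // x ∈ M} ⊕ {x : Fin n // x ∉ M} ≃ Fin n := Equiv.sumCompl (· ∈ M) with he
  have hC : (A.submatrix e e).PosDef := aux_posDef_submatrix hA e e.injective
  have hCoff : ∀ a b, a ≠ b → (A.submatrix e e)⁻¹ a b ≤ 0 := by
    intro a b hab
    rw [inv_submatrix_equiv]
    exact hoff _ _ (fun h => hab (e.injective h))
  have hmain := aux_block hC hCoff i j hij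
  have hident : (A.submatrix e e).toBlocks₁₁
      = A.submatrix (fun i : M => (i : Fin n)) (fun i : M => (i : Fin n)) := by
    ext a b
    simp [toBlocks₁₁, he]
  rwa [hident] at hmain

/-- If `R` is symmetric positive definite and `S = diag(s)` is a signature matrix such that
`SR⁻¹S` has non-positive off-diagonal entries and its inverse `SRS` has non-negative
entries, then for every principal submatrix `R_M` the restricted signature matrix `S_M`
makes `S_M R_M⁻¹ S_M` have non-positive off-diagonal entries and `S_M R_M S_M` have
non-negative entries; if moreover all entries of `R` are positive then `S = ±I`. -/
theorem stmt18 {n : ℕ}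
    (R : Matrix (Fin n) (Fin n) ℝ) (hR : R.PosDef)
    (s : Fin n → ℝ) (hs : ∀ i, s i = 1 ∨ s i = -1)
    (hoff : ∀ i j, i ≠ j → (Matrix.diagonal s * R⁻¹ * Matrix.diagonal s) i j ≤ 0)
    (hpos : ∀ i j, 0 ≤ (Matrix.diagonal s * R * Matrix.diagonal s) i j) :
    (∀ M : Finset (Fin n),
      (∀ i j : M, i ≠ j →
        (Matrix.diagonal (fun i : M => s i) *
          (R.submatrix (fun i : M => (i : Fin n)) (fun i : M => (i : Fin n)))⁻¹ *
          Matrix.diagonal (fun i : M => s i)) i j ≤ 0) ∧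
      (∀ i j : M, 0 ≤
        (Matrix.diagonal (fun i : M => s i) *
          R.submatrix (fun i : M => (i : Fin n)) (fun i : M => (i : Fin n)) *
          Matrix.diagonal (fun i : M => s i)) i j)) ∧
    ((∀ i j, 0 < R i j) → (∀ i, s i = 1) ∨ (∀ i, s i = -1)) := by
  classical
  have hs2 : ∀ i, s i * s i = 1 := fun i => by rcases hs i with h | h <;> rw [h] <;> norm_num
  have hs0 : ∀ i, s i ≠ 0 := fun i => by rcases hs i with h | h <;> rw [h] <;> norm_num
  have hRdet : IsUnit R.det := isUnit_iff_ne_zero.mpr hR.det_pos.ne'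
  have hSS : Matrix.diagonal s * Matrix.diagonal s = (1 : Matrix (Fin n) (Fin n) ℝ) := by
    rw [diagonal_mul_diagonal, ← diagonal_one]
    exact congrArg Matrix.diagonal (funext fun i => hs2 i)
  set A := Matrix.diagonal s * R * Matrix.diagonal s with hA
  have hApd : A.PosDef := aux_diag_conj hR hs0
  have key : A * (Matrix.diagonal s * R⁻¹ * Matrix.diagonal s) = 1 := by
    rw [hA]
    calc Matrix.diagonal s * R * Matrix.diagonal s *
          (Matrix.diagonal s * R⁻¹ * Matrix.diagonal s)
        = Matrix.diagonal s * (R * ((Matrix.diagonal s * Matrix.diagonal s) * R⁻¹)) *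
            Matrix.diagonal s := by simp only [Matrix.mul_assoc]
      _ = 1 := by rw [hSS, Matrix.one_mul, mul_nonsing_inv _ hRdet, Matrix.mul_one, hSS]
  have hAinv : A⁻¹ = Matrix.diagonal s * R⁻¹ * Matrix.diagonal s := inv_eq_right_inv key
  have hAoff : ∀ i j, i ≠ j → A⁻¹ i j ≤ 0 := by
    rw [hAinv]; exact hoff
  constructor
  · intro M
    set f : M → Fin n := fun i => (i : Fin n) with hf
    have hfinj : Function.Injective f := Subtype.val_injective
    set sM : M → ℝ := fun i => s i with hsM
    have hRM : (R.submatrix f f).PosDef := aux_posDef_submatrix hR f hfinj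
    have hRMdet : IsUnit (R.submatrix f f).det := isUnit_iff_ne_zero.mpr hRM.det_pos.ne'
    have hSSM : Matrix.diagonal sM * Matrix.diagonal sM = (1 : Matrix M M ℝ) := by
      rw [diagonal_mul_diagonal, ← diagonal_one]
      exact congrArg Matrix.diagonal (funext fun i => hs2 i)
    have hAsub : Matrix.diagonal sM * R.submatrix f f * Matrix.diagonal sM = A.submatrix f f := by
      ext a b
      simp [hA, mul_diagonal, diagonal_mul, hsM, hf]
    have keyM : (A.submatrix f f) *
        (Matrix.diagonal sM * (R.submatrix f f)⁻¹ * Matrix.diagonal sM) = 1 := by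
      rw [← hAsub]
      calc Matrix.diagonal sM * R.submatrix f f * Matrix.diagonal sM *
            (Matrix.diagonal sM * (R.submatrix f f)⁻¹ * Matrix.diagonal sM)
          = Matrix.diagonal sM * (R.submatrix f f *
              ((Matrix.diagonal sM * Matrix.diagonal sM) * (R.submatrix f f)⁻¹)) *
              Matrix.diagonal sM := by simp only [Matrix.mul_assoc]
        _ = 1 := by
            rw [hSSM, Matrix.one_mul, mul_nonsing_inv _ hRMdet, Matrix.mul_one, hSSM]
    have hAsubinv : (A.submatrix f f)⁻¹
        = Matrix.diagonal sM * (R.submatrix f f)⁻¹ * Matrix.diagonal sM := inv_eq_right_inv keyM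
    constructor
    · intro i j hij
      have := aux_finset hApd hAoff M i j hij
      rw [hAsubinv] at this
      exact this
    · intro i j
      have h := hpos i j
      simp only [hA, mul_diagonal, diagonal_mul] at h
      simp only [mul_diagonal, diagonal_mul, submatrix_apply, hsM, hf]
      exact h
  · intro hRpos
    have hsame : ∀ i j, s i = s j := by
      intro i j
      have h := hpos i j
      rw [hA] at h
      simp only [mul_diagonal, diagonal_mul] at h
      have hr := hRpos i j
      rcases hs i with hi | hi <;> rcases hs j with hj | hj <;> rw [hi, hj] at h ⊢ <;>
        first | rfl | nlinarith
    rcases isEmpty_or_nonempty (Fin n) with he | hne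
    · exact Or.inl fun i => isEmptyElim i
    · obtain ⟨i0⟩ := hne
      rcases hs i0 with h | h
      · exact Or.inl fun i => (hsame i i0).trans h
      · exact Or.inr fun i => (hsame i i0).trans h
end
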